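/- arXiv:2008.02119 — 2 statements merged into one kernel-verified Lean document; each statement's English description precedes it below -/
import Mathlib

section
/- Let Ω be a bounded open subset of ℝ^N and u ∈ L^{2*_s}(ℝ^N) with u = 0 a.e. on ℝ^N∖Ω. For any δ with 0 < δ < ∫_Ω |u|^{2*_s} dx, there exist r > 0 and z_max ∈ ℝ^N such that the Lévy concentration function satisfies Q_u(r) = ∫_{B(z_max,r)} |u|^{2*_s} dx = δ (the supremum defining Q_u(r) is attained at z_max), and dist(z_max, Ω) ≤ r. -/
open MeasureTheory Real
open ENNReal

noncomputable section

abbrev Euc (N : ℕ) := EuclideanSpace ℝ (Fin N)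

/-- The critical exponent `2*_s = 2N/(N-2s)`. -/
def twoStar (N : ℕ) (s : ℝ) : ℝ := 2 * N / (N - 2 * s)

/-- Square of the Gagliardo seminorm `‖u‖²`. -/
def gagSq (N : ℕ) (s : ℝ) (u : Euc N → ℝ) : ℝ :=
  ∫ p : Euc N × Euc N, (u p.1 - u p.2) ^ 2 / dist p.1 p.2 ^ ((N : ℝ) + 2 * s)

/-- The Gagliardo seminorm `‖u‖`. -/
def gagNorm (N : ℕ) (s : ℝ) (u : Euc N → ℝ) : ℝ := Real.sqrt (gagSq N s u)

/-- Finiteness of the Gagliardo seminorm (`‖u‖ < ∞`). -/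
def GagFinite (N : ℕ) (s : ℝ) (u : Euc N → ℝ) : Prop :=
  Integrable (fun p : Euc N × Euc N => (u p.1 - u p.2) ^ 2 / dist p.1 p.2 ^ ((N : ℝ) + 2 * s))

/-- Membership in `Ḣ^s(Ω)`: measurable, in `L^{2*_s}(ℝ^N)`, finite Gagliardo seminorm,
and vanishing a.e. outside `Ω`. -/
structure MemHs (N : ℕ) (s : ℝ) (Ω : Set (Euc N)) (u : Euc N → ℝ) : Prop where
  meas : Measurable u
  lp : Integrable fun x : Euc N => |u x| ^ twoStar N s
  fin : GagFinite N s u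
  vanish : ∀ᵐ x : Euc N, x ∉ Ω → u x = 0

/-- The energy functional `E(u;Ω)`. -/
def energy (N : ℕ) (s : ℝ) (Ω : Set (Euc N)) (u : Euc N → ℝ) : ℝ :=
  (1 / 2) * gagSq N s u - (1 / twoStar N s) * ∫ x in Ω, |u x| ^ twoStar N s

/-- The Nehari functional `N(u;Ω)`. -/
def nehariFun (N : ℕ) (s : ℝ) (Ω : Set (Euc N)) (u : Euc N → ℝ) : ℝ :=
  gagSq N s u - ∫ x in Ω, |u x| ^ twoStar N s

/-- The pairing `⟨E'(u), v⟩` (with domain `Ω`). -/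
def pairing (N : ℕ) (s : ℝ) (Ω : Set (Euc N)) (u v : Euc N → ℝ) : ℝ :=
  (∫ p : Euc N × Euc N, (u p.1 - u p.2) * (v p.1 - v p.2) / dist p.1 p.2 ^ ((N : ℝ) + 2 * s))
    - ∫ x in Ω, |u x| ^ (twoStar N s - 2) * u x * v x

/-- The sharp fractional Sobolev constant `S(N,s)`. -/
def sobolevS (N : ℕ) (s : ℝ) : ℝ :=
  (2 : ℝ) ^ (-(2 * s)) * Real.pi ^ (-s) *
    (Real.Gamma ((N - 2 * s) / 2) / Real.Gamma ((N + 2 * s) / 2)) *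
    (Real.Gamma N / Real.Gamma (N / 2)) ^ (2 * s / N)

/-- The Lévy concentration function `Q_u(r)`. -/
def levyQ (N : ℕ) (s : ℝ) (u : Euc N → ℝ) (r : ℝ) : ℝ :=
  ⨆ z : Euc N, ∫ x in Metric.ball z r, |u x| ^ twoStar N s

private lemma aux_uniint {α : Type*} [MeasurableSpace α] {μ : Measure α} {f : α → ℝ}
    (hf : Integrable f μ) (hf0 : ∀ x, 0 ≤ f x) {ε : ℝ} (hε : 0 < ε) :
    ∃ η > (0:ℝ), ∀ A : Set α, μ A < ENNReal.ofReal η → ∫ x in A, f x ∂μ ≤ ε := by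
  have hfin : ∫⁻ x, ENNReal.ofReal (f x) ∂μ ≠ ∞ := by
    have h1 : ∫⁻ x, ENNReal.ofReal (f x) ∂μ ≤ ∫⁻ x, (‖f x‖₊ : ℝ≥0∞) ∂μ := by
      refine lintegral_mono fun x => ?_
      rw [← ENNReal.ofReal_coe_nnreal, coe_nnnorm]
      exact ENNReal.ofReal_le_ofReal (le_abs_self _)
    exact (lt_of_le_of_lt h1 hf.hasFiniteIntegral).ne
  have key : ∀ A : Set α, (∫⁻ x in A, ENNReal.ofReal (f x) ∂μ) < ENNReal.ofReal ε →
      ∫ x in A, f x ∂μ ≤ ε := by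
    intro A hA
    rw [integral_eq_lintegral_of_nonneg_ae (Filter.Eventually.of_forall hf0)
      hf.aestronglyMeasurable.restrict]
    exact ENNReal.toReal_le_of_le_ofReal hε.le hA.le
  obtain ⟨d, hd0, hd⟩ := exists_pos_setLIntegral_lt_of_measure_lt hfin
      (ε := ENNReal.ofReal ε) (by simp [ENNReal.ofReal_eq_zero]; linarith)
  rcases eq_or_ne d ∞ with hdt | hdt
  · exact ⟨1, one_pos, fun A hA => key A (hd A (hdt ▸ lt_of_lt_of_le hA le_top))⟩
  · refine ⟨d.toReal, ENNReal.toReal_pos hd0.ne' hdt, fun A hA => key A (hd A ?_)⟩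
    rwa [ENNReal.ofReal_toReal hdt] at hA


/-- for bounded `Ω` and `0 < δ < ∫_Ω |u|^{2*_s}`, the Lévy concentration
function attains the value `δ` at some radius `r > 0` and center `z_max` with
`dist(z_max, Ω) ≤ r`. -/
theorem statement10 (N : ℕ) (s : ℝ) (hN : 2 ≤ N) (hs0 : 0 < s) (hs1 : s < 1)
    (hsN : 2 * s < N)
    (Ω : Set (Euc N)) (hΩo : IsOpen Ω) (hΩb : Bornology.IsBounded Ω)
    (u : Euc N → ℝ) (hmeas : Measurable u)
    (hLp : Integrable fun x : Euc N => |u x| ^ twoStar N s)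
    (hvan : ∀ᵐ x : Euc N, x ∉ Ω → u x = 0)
    (δ : ℝ) (hδ0 : 0 < δ) (hδ : δ < ∫ x in Ω, |u x| ^ twoStar N s) :
    ∃ r > (0 : ℝ), ∃ zmax : Euc N,
      (∫ x in Metric.ball zmax r, |u x| ^ twoStar N s) = δ ∧
      levyQ N s u r = δ ∧
      Metric.infDist zmax Ω ≤ r := by
  classical
  have hNpos : 0 < N := lt_of_lt_of_le two_pos hN
  have hNR : (0:ℝ) < N := by exact_mod_cast hNpos
  set f : Euc N → ℝ := fun x => |u x| ^ twoStar N s with hfdef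
  have htwo : 0 < twoStar N s := div_pos (by linarith) (by linarith)
  have hf0 : ∀ x, 0 ≤ f x := fun x => Real.rpow_nonneg (abs_nonneg _) _
  have hfint : Integrable f := hLp
  have hvan' : ∀ᵐ x, x ∉ Ω → f x = 0 := by
    filter_upwards [hvan] with x hx hxΩ
    simp [hfdef, hx hxΩ, Real.zero_rpow htwo.ne']
  set G : Euc N → ℝ → ℝ := fun z r => ∫ x in Metric.ball z r, f x with hGdef
  have hGnn : ∀ z r, 0 ≤ G z r := fun z r =>
    setIntegral_nonneg measurableSet_ball (fun x _ => hf0 x)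
  have hGle : ∀ z r, G z r ≤ ∫ x, f x := fun z r =>
    setIntegral_le_integral hfint (Filter.Eventually.of_forall hf0)
  have hGb : ∀ r, BddAbove (Set.range fun z => G z r) := fun r =>
    ⟨∫ x, f x, by rintro _ ⟨z, rfl⟩; exact hGle z r⟩
  set Q : ℝ → ℝ := fun r => ⨆ z, G z r with hQdef
  have hQleG : ∀ z r, G z r ≤ Q r := fun z r => le_ciSup (hGb r) z
  have hQ0 : Q 0 = 0 := by
    simp [hQdef, hGdef]
  have hGmono : ∀ (z : Euc N) {a b : ℝ}, a ≤ b → G z a ≤ G z b := fun z a b hab =>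
    setIntegral_mono_set hfint.integrableOn (ae_of_all _ hf0)
      (Metric.ball_subset_ball hab).eventuallyLE
  -- volume of balls
  haveI : Nonempty (Fin N) := ⟨⟨0, hNpos⟩⟩
  haveI : Nontrivial (Euc N) := by infer_instance
  set c : ℝ≥0∞ := volume (Metric.ball (0 : Euc N) 1) with hc
  have hball : ∀ (z : Euc N) (t : ℝ), 0 ≤ t →
      volume (Metric.ball z t) = ENNReal.ofReal (t ^ N) * c := by
    intro z t ht
    rw [hc, Measure.addHaar_ball volume z ht, finrank_euclideanSpace_fin]
  have hballfin : ∀ (z : Euc N) (t : ℝ), volume (Metric.ball z t) < ∞ := fun z t =>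
    measure_ball_lt_top
  have hcfin : c ≠ ∞ := (hballfin 0 1).ne
  set C : ℝ := c.toReal + 1 with hC
  have hCpos : 0 < C := by positivity
  have hcC : c ≤ ENNReal.ofReal C := by
    calc c = ENNReal.ofReal c.toReal := (ENNReal.ofReal_toReal hcfin).symm
      _ ≤ ENNReal.ofReal C := ENNReal.ofReal_le_ofReal (by rw [hC]; linarith)
  have hann : ∀ (z : Euc N) (a b : ℝ), 0 ≤ a → a ≤ b →
      volume (Metric.ball z b \ Metric.ball z a) ≤ ENNReal.ofReal ((b ^ N - a ^ N) * C) := by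
    intro z a b ha hab
    have hpow : a ^ N ≤ b ^ N := pow_le_pow_left₀ ha hab N
    have h1 : volume (Metric.ball z b \ Metric.ball z a)
        = volume (Metric.ball z b) - volume (Metric.ball z a) :=
      measure_diff (Metric.ball_subset_ball hab) measurableSet_ball.nullMeasurableSet
        (hballfin z a).ne
    rw [h1, hball z b (ha.trans hab), hball z a ha]
    calc ENNReal.ofReal (b ^ N) * c - ENNReal.ofReal (a ^ N) * c
        = (ENNReal.ofReal (b ^ N) - ENNReal.ofReal (a ^ N)) * c := by
          rw [ENNReal.sub_mul (fun _ _ => hcfin)]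
      _ = ENNReal.ofReal (b ^ N - a ^ N) * c := by
          rw [ENNReal.ofReal_sub _ (pow_nonneg ha N)]
      _ ≤ ENNReal.ofReal (b ^ N - a ^ N) * ENNReal.ofReal C := by gcongr
      _ = ENNReal.ofReal ((b ^ N - a ^ N) * C) :=
          (ENNReal.ofReal_mul (by linarith)).symm
  have hannint : ∀ ε : ℝ, 0 < ε → ∃ κ > (0:ℝ), ∀ (z : Euc N) (a b : ℝ), 0 ≤ a → a ≤ b →
      b ^ N - a ^ N < κ → ∀ D : Set (Euc N), D ⊆ Metric.ball z b \ Metric.ball z a →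
      ∫ x in D, f x ≤ ε := by
    intro ε hε
    obtain ⟨η, hη0, hη⟩ := aux_uniint hfint hf0 hε
    refine ⟨η / C, by positivity, fun z a b ha hab hk D hD => ?_⟩
    refine hη D (lt_of_le_of_lt (measure_mono hD) (lt_of_le_of_lt (hann z a b ha hab) ?_))
    rw [ENNReal.ofReal_lt_ofReal_iff hη0]
    calc (b ^ N - a ^ N) * C < (η / C) * C := by
          exact mul_lt_mul_of_pos_right hk hCpos
      _ = η := div_mul_cancel₀ _ hCpos.ne'
  -- Q is continuous on any Icc 0 R
  have hQcont : ∀ R : ℝ, ContinuousOn Q (Set.Icc 0 R) := by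
    intro R
    rw [Metric.continuousOn_iff]
    intro b hb ε hε
    obtain ⟨κ, hκ0, hκ⟩ := hannint (ε / 2) (by linarith)
    obtain ⟨κ2, hκ20, hκ2⟩ := Metric.continuousAt_iff.mp ((continuous_pow N : Continuous fun t : ℝ => t ^ N)).continuousAt κ hκ0
    refine ⟨κ2, hκ20, fun a ha hd => ?_⟩
    have hab2 : |a ^ N - b ^ N| < κ := by
      have := hκ2 hd; rwa [Real.dist_eq] at this
    have hmain : ∀ p q : ℝ, 0 ≤ p → p ≤ q → q ^ N - p ^ N < κ → Q q ≤ Q p + ε / 2 := by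
      intro p q hp hpq hk
      refine ciSup_le fun z => ?_
      have hsplit : G z q = G z p + ∫ x in Metric.ball z q \ Metric.ball z p, f x := by
        rw [hGdef]; dsimp only
        rw [← integral_inter_add_diff measurableSet_ball hfint.integrableOn,
          Set.inter_eq_right.mpr (Metric.ball_subset_ball hpq)]
      rw [hsplit]
      exact add_le_add (hQleG z p) (hκ z p q hp hpq hk _ subset_rfl)
    rcases le_total a b with h | h
    · have h1 : Q a ≤ Q b := ciSup_le fun z => (hGmono z h).trans (hQleG z b)
      have h2 : Q b ≤ Q a + ε / 2 := by
        refine hmain a b ha.1 h ?_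
        have : b ^ N - a ^ N ≤ |a ^ N - b ^ N| := by
          rw [abs_sub_comm]; exact le_abs_self _
        linarith
      rw [Real.dist_eq, abs_lt]; constructor <;> linarith
    · have h1 : Q b ≤ Q a := ciSup_le fun z => (hGmono z h).trans (hQleG z a)
      have h2 : Q a ≤ Q b + ε / 2 := by
        refine hmain b a hb.1 h ?_
        have : a ^ N - b ^ N ≤ |a ^ N - b ^ N| := le_abs_self _
        linarith
      rw [Real.dist_eq, abs_lt]; constructor <;> linarith
  -- upper point for IVT
  obtain ⟨R0, hR0⟩ := hΩb.subset_ball (0 : Euc N)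
  set R : ℝ := max R0 1 with hR
  have hRpos : (0:ℝ) < R := lt_of_lt_of_le one_pos (le_max_right _ _)
  have hΩR : Ω ⊆ Metric.ball 0 R := hR0.trans (Metric.ball_subset_ball (le_max_left _ _))
  have hIΩ : (∫ x in Ω, f x) ≤ G 0 R :=
    setIntegral_mono_set hfint.integrableOn (ae_of_all _ hf0) hΩR.eventuallyLE
  have hδR : δ ≤ Q R := le_trans hδ.le (hIΩ.trans (hQleG 0 R))
  have hδmem : δ ∈ Set.Icc (Q 0) (Q R) := ⟨by rw [hQ0]; exact hδ0.le, hδR⟩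
  obtain ⟨r, hrIcc, hQr⟩ := intermediate_value_Icc hRpos.le (hQcont R) hδmem
  have hr0 : 0 < r := by
    rcases lt_or_eq_of_le hrIcc.1 with h | h
    · exact h
    · exfalso; rw [← h, hQ0] at hQr; linarith
  have hΩne : Ω.Nonempty := by
    by_contra h
    rw [Set.not_nonempty_iff_eq_empty] at h
    rw [h] at hδ; simp at hδ; linarith
  -- the compact set K
  set K : Set (Euc N) := {z | Metric.infDist z Ω ≤ r} with hK
  have hKclosed : IsClosed K := isClosed_le (Metric.continuous_infDist_pt Ω) continuous_const
  have hKsub : K ⊆ Metric.cthickening r Ω := by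
    intro z hz
    rw [Metric.mem_cthickening_iff]
    have h1 : Metric.infEDist z Ω ≠ ∞ := Metric.infEDist_ne_top hΩne
    rw [← ENNReal.ofReal_toReal h1]
    exact ENNReal.ofReal_le_ofReal hz
  have hKcpt : IsCompact K :=
    Metric.isCompact_of_isClosed_isBounded hKclosed (hΩb.cthickening.subset hKsub)
  have hKne : K.Nonempty := by
    obtain ⟨w, hw⟩ := hΩne
    exact ⟨w, by simp [hK, Metric.infDist_zero_of_mem hw, hr0.le]⟩
  -- continuity of z ↦ G z r
  have hhcont : Continuous fun z => G z r := by
    rw [Metric.continuous_iff]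
    intro z0 ε hε
    obtain ⟨κ, hκ0, hκ⟩ := hannint (ε / 2) (by linarith)
    obtain ⟨κ2, hκ20, hκ2⟩ := Metric.continuousAt_iff.mp ((continuous_pow N : Continuous fun t : ℝ => t ^ N)).continuousAt κ hκ0
    refine ⟨κ2, hκ20, fun z hz => ?_⟩
    have hbound : ∀ w w' : Euc N, dist w w' < κ2 → G w r ≤ G w' r + ε / 2 := by
      intro w w' hd
      have hsub1 : Metric.ball w r ⊆ Metric.ball w' (r + dist w w') := by
        intro x hx
        rw [Metric.mem_ball] at *
        calc dist x w' ≤ dist x w + dist w w' := dist_triangle _ _ _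
          _ < r + dist w w' := by linarith
      have hsplit : G w r ≤ G w' r + ∫ x in Metric.ball w r \ Metric.ball w' r, f x := by
        rw [hGdef]; dsimp only
        rw [← integral_inter_add_diff measurableSet_ball hfint.integrableOn]
        refine add_le_add_left (setIntegral_mono_set hfint.integrableOn
          (ae_of_all _ hf0) Set.inter_subset_right.eventuallyLE) _
      refine hsplit.trans (add_le_add_right ?_ _)
      have hDsub : Metric.ball w r \ Metric.ball w' r ⊆
          Metric.ball w' (r + dist w w') \ Metric.ball w' r :=
        Set.diff_subset_diff_left hsub1
      have hrd : (r + dist w w') ^ N - r ^ N < κ := by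
        have h3 : dist (r + dist w w') r < κ2 := by
          rw [Real.dist_eq, add_sub_cancel_left, abs_of_nonneg dist_nonneg]; exact hd
        have := hκ2 h3
        rw [Real.dist_eq] at this
        have h2 : (r + dist w w') ^ N - r ^ N ≤ |(r + dist w w') ^ N - r ^ N| := le_abs_self _
        linarith
      exact hκ w' r (r + dist w w') hr0.le (by linarith [dist_nonneg (x := w) (y := w')]) hrd _ hDsub
    have h1 := hbound z z0 hz
    have h2 := hbound z0 z (by rwa [dist_comm])
    rw [Real.dist_eq, abs_lt]; constructor <;> linarith
  obtain ⟨zmax, hzK, hzmax⟩ := hKcpt.exists_isMaxOn hKne hhcont.continuousOn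
  have hout : ∀ z, z ∉ K → G z r = 0 := by
    intro z hz
    rw [hK, Set.mem_setOf_eq, not_le] at hz
    have hdisj : ∀ x ∈ Metric.ball z r, x ∉ Ω := by
      intro x hx hxΩ
      have h1 : Metric.infDist z Ω ≤ dist z x := Metric.infDist_le_dist_of_mem hxΩ
      rw [Metric.mem_ball, dist_comm] at hx
      linarith
    have hae : ∀ᵐ x ∂(volume.restrict (Metric.ball z r)), f x = 0 := by
      filter_upwards [ae_restrict_mem measurableSet_ball, ae_restrict_of_ae hvan'] with x hx1 hx2
      exact hx2 (hdisj x hx1)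
    exact integral_eq_zero_of_ae hae
  have hQrmax : Q r = G zmax r := by
    apply le_antisymm
    · refine ciSup_le fun z => ?_
      by_cases hzz : z ∈ K
      · exact hzmax hzz
      · rw [hout z hzz]; exact hGnn zmax r
    · exact hQleG zmax r
  refine ⟨r, hr0, zmax, ?_, ?_, hzK⟩
  · show G zmax r = δ
    rw [← hQrmax]; exact hQr
  · show Q r = δ
    exact hQr

end
end

section
/- Let N = 4n + m with n ≥ 1 an integer and m ∈ {0,1,2,3}. Then for each j = 1, …, n there exist a closed subgroup G_j of O(N) and a continuous surjective group homomorphism σ_j : G_j → {1,−1} such that: (a) G_j and σ_j satisfy conditions (G1) and (G2); and (b) whenever 1 ≤ i ≠ j ≤ n, if u : ℝ^N → ℝ is σ_i-equivariant (for G_i) and not identically zero, and v : ℝ^N → ℝ is σ_j-equivariant (for G_j) and not identically zero, then u ≠ v. -/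
open MeasureTheory Real

noncomputable section

/-- The orthogonal group `O(N)`. -/
abbrev ONgrp (N : ℕ) := Matrix.orthogonalGroup (Fin N) ℝ

/-- The linear action of `O(N)` on `ℝ^N`. -/
def ogAct {N : ℕ} (g : ONgrp N) (x : Euc N) : Euc N :=
  Matrix.toEuclideanLin (g : Matrix (Fin N) (Fin N) ℝ) x

/-- `σ`-equivariance of `u : ℝ^N → ℝ` under a subgroup `G` of `O(N)`:
`u (g x) = σ(g) u (x)` for all `g ∈ G`, `x ∈ ℝ^N`. -/
def IsEquivariant {N : ℕ} (G : Subgroup (ONgrp N)) (σ : G →* ℤˣ) (u : Euc N → ℝ) : Prop :=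
  ∀ g : G, ∀ x : Euc N, u (ogAct (g : ONgrp N) x) = ((σ g : ℤ) : ℝ) * u x

/-- `G`-invariance of a set. -/
def IsInvariantSet {N : ℕ} (G : Subgroup (ONgrp N)) (Ω : Set (Euc N)) : Prop :=
  ∀ g : G, ∀ x ∈ Ω, ogAct (g : ONgrp N) x ∈ Ω

/-- Condition (G1): every `G`-orbit is infinite or a single point. -/
def CondG1 {N : ℕ} (G : Subgroup (ONgrp N)) : Prop :=
  ∀ x : Euc N, ({y : Euc N | ∃ g : G, ogAct (g : ONgrp N) x = y}).Infinite ∨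
    ∀ g : G, ogAct (g : ONgrp N) x = x

/-- Condition (G2): there is a point `ξ` with `σ = 1` on the stabilizer of `ξ`. -/
def CondG2 {N : ℕ} (G : Subgroup (ONgrp N)) (σ : G →* ℤˣ) : Prop :=
  ∃ ξ : Euc N, ∀ g : G, ogAct (g : ONgrp N) ξ = ξ → σ g = 1

namespace S19

open Matrix


noncomputable def B (p : ℝ × Bool) : Matrix (Fin 4) (Fin 4) ℝ :=
  if p.2 then
    !![0,0,Real.cos p.1,Real.sin p.1;
       0,0,Real.sin p.1,-Real.cos p.1;
       Real.cos p.1,Real.sin p.1,0,0;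
       Real.sin p.1,-Real.cos p.1,0,0]
  else
    !![Real.cos p.1,-Real.sin p.1,0,0;
       Real.sin p.1,Real.cos p.1,0,0;
       0,0,Real.cos p.1,-Real.sin p.1;
       0,0,Real.sin p.1,Real.cos p.1]

def mulP (p q : ℝ × Bool) : ℝ × Bool := (p.1 + (if p.2 then -q.1 else q.1), xor p.2 q.2)

def invP (p : ℝ × Bool) : ℝ × Bool := ((if p.2 then p.1 else -p.1), p.2)

lemma B_mul (p q : ℝ × Bool) : B p * B q = B (mulP p q) := by
  obtain ⟨θ, b⟩ := p; obtain ⟨φ, c⟩ := q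
  cases b <;> cases c <;>
    · ext i j
      fin_cases i <;> fin_cases j <;>
        simp [B, mulP, Matrix.mul_apply, Fin.sum_univ_four, Real.cos_add, Real.sin_add, Matrix.vecHead, Matrix.vecTail,
          Real.cos_neg, Real.sin_neg] <;> ring

lemma B_transpose (p : ℝ × Bool) : (B p)ᵀ = B (invP p) := by
  obtain ⟨θ, b⟩ := p
  cases b <;>
    · ext i j
      fin_cases i <;> fin_cases j <;>
        simp [B, invP, Real.cos_neg, Real.sin_neg, Matrix.vecHead, Matrix.vecTail]

lemma B_one : B (0, false) = 1 := by
  ext i j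
  fin_cases i <;> fin_cases j <;> simp [B, Matrix.one_apply, Matrix.vecHead, Matrix.vecTail]

lemma invP_mulP (p : ℝ × Bool) : mulP (invP p) p = (0, false) := by
  obtain ⟨θ, b⟩ := p; cases b <;> simp [mulP, invP]

lemma mulP_invP (p : ℝ × Bool) : mulP p (invP p) = (0, false) := by
  obtain ⟨θ, b⟩ := p; cases b <;> simp [mulP, invP]

lemma B_congr {θ θ' : ℝ} (b : Bool) (h1 : Real.cos θ = Real.cos θ')
    (h2 : Real.sin θ = Real.sin θ') : B (θ, b) = B (θ', b) := by
  cases b <;> simp [B, h1, h2]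

lemma B_continuous (b : Bool) : Continuous fun θ : ℝ => B (θ, b) := by
  cases b <;>
    · apply continuous_matrix
      intro i j
      fin_cases i <;> fin_cases j <;> simp [B] <;> fun_prop

variable (n m : ℕ)


def eN : (Fin 4 × Fin n) ⊕ Fin m ≃ Fin (4 * n + m) :=
  (Equiv.sumCongr finProdFinEquiv (Equiv.refl (Fin m))).trans finSumFinEquiv

noncomputable def Phi (p : Fin n → ℝ × Bool) : Matrix (Fin (4*n+m)) (Fin (4*n+m)) ℝ :=
  Matrix.reindex (eN n m) (eN n m)
    (Matrix.fromBlocks (Matrix.blockDiagonal fun k => B (p k)) 0 0 (1 : Matrix (Fin m) (Fin m) ℝ))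

variable {n m}

lemma Phi_mul (p q : Fin n → ℝ × Bool) :
    Phi n m p * Phi n m q = Phi n m fun k => mulP (p k) (q k) := by
  unfold Phi
  rw [reindex_apply, reindex_apply, reindex_apply, submatrix_mul_equiv, fromBlocks_multiply]
  have : (blockDiagonal fun k => B (mulP (p k) (q k)))
      = (blockDiagonal fun k => B (p k)) * blockDiagonal fun k => B (q k) := by
    rw [← Matrix.blockDiagonal_mul]
    simp [B_mul]
  rw [← this]
  simp

lemma Phi_transpose (p : Fin n → ℝ × Bool) :
    (Phi n m p)ᵀ = Phi n m fun k => invP (p k) := by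
  unfold Phi
  rw [transpose_reindex, fromBlocks_transpose, blockDiagonal_transpose]
  simp [B_transpose]

lemma Phi_one : Phi n m (fun _ => (0, false)) = 1 := by
  unfold Phi
  have : (blockDiagonal fun _ : Fin n => B (0, false)) = (1 : Matrix (Fin 4 × Fin n) _ ℝ) := by
    rw [show (fun _ : Fin n => B (0, false)) = (1 : Fin n → Matrix (Fin 4) (Fin 4) ℝ) by
      funext k; exact B_one]
    exact Matrix.blockDiagonal_one
  rw [this, Matrix.fromBlocks_one, reindex_apply, submatrix_one_equiv]

lemma Phi_mem (p : Fin n → ℝ × Bool) : Phi n m p ∈ Matrix.orthogonalGroup (Fin (4*n+m)) ℝ := by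
  rw [Matrix.mem_orthogonalGroup_iff]
  rw [Phi_transpose, Phi_mul]
  simp [mulP_invP, Phi_one]

lemma Phi_apply (p : Fin n → ℝ × Bool) (a b : (Fin 4 × Fin n) ⊕ Fin m) :
    Phi n m p (eN n m a) (eN n m b) =
      Matrix.fromBlocks (Matrix.blockDiagonal fun k => B (p k)) 0 0
        (1 : Matrix (Fin m) (Fin m) ℝ) a b := by
  simp [Phi, reindex_apply, submatrix_apply]

lemma Phi_apply_block (p : Fin n → ℝ × Bool) (j : Fin n) (r r' : Fin 4) :
    Phi n m p (eN n m (Sum.inl (r, j))) (eN n m (Sum.inl (r', j))) = B (p j) r r' := by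
  rw [Phi_apply]
  simp [Matrix.blockDiagonal_apply]

lemma Phi_mulVec_inl (p : Fin n → ℝ × Bool) (x : Fin (4*n+m) → ℝ) (r : Fin 4) (k : Fin n) :
    (Phi n m p *ᵥ x) (eN n m (Sum.inl (r, k))) =
      ∑ r' : Fin 4, B (p k) r r' * x (eN n m (Sum.inl (r', k))) := by
  rw [Matrix.mulVec]
  show ∑ j, Phi n m p (eN n m (Sum.inl (r, k))) j * x j = _
  rw [← Equiv.sum_comp (eN n m) (fun j => Phi n m p (eN n m (Sum.inl (r, k))) j * x j)]
  rw [Fintype.sum_sum_type]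
  have h2 : ∀ t : Fin m, Phi n m p (eN n m (Sum.inl (r, k))) (eN n m (Sum.inr t)) = 0 := by
    intro t; rw [Phi_apply]; simp
  simp only [Phi_apply, h2, zero_mul, Finset.sum_const_zero, add_zero]
  rw [Fintype.sum_prod_type]
  have : ∀ r' : Fin 4, ∀ k' : Fin n,
      (Matrix.fromBlocks (Matrix.blockDiagonal fun k => B (p k)) 0 0
        (1 : Matrix (Fin m) (Fin m) ℝ)) (Sum.inl (r, k)) (Sum.inl (r', k')) =
      if k' = k then B (p k) r r' else 0 := by
    intro r' k'
    simp [Matrix.blockDiagonal_apply, eq_comm]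
  simp only [this, ite_mul, zero_mul]
  rw [Finset.sum_comm]
  simp [Finset.sum_ite_eq]

lemma Phi_mulVec_inr (p : Fin n → ℝ × Bool) (x : Fin (4*n+m) → ℝ) (t : Fin m) :
    (Phi n m p *ᵥ x) (eN n m (Sum.inr t)) = x (eN n m (Sum.inr t)) := by
  rw [Matrix.mulVec]
  show ∑ j, Phi n m p (eN n m (Sum.inr t)) j * x j = _
  rw [← Equiv.sum_comp (eN n m) (fun j => Phi n m p (eN n m (Sum.inr t)) j * x j)]
  rw [Fintype.sum_sum_type]
  have h1 : ∀ q : Fin 4 × Fin n, Phi n m p (eN n m (Sum.inr t)) (eN n m (Sum.inl q)) = 0 := by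
    intro q; rw [Phi_apply]; simp
  have h2 : ∀ t' : Fin m, Phi n m p (eN n m (Sum.inr t)) (eN n m (Sum.inr t')) =
      if t = t' then 1 else 0 := by
    intro t'; rw [Phi_apply]; simp [Matrix.one_apply]
  simp [h1, h2]




variable (n m : ℕ)

def Gsub : Subgroup (ONgrp (4 * n + m)) where
  carrier := {g | ∃ p, (g : Matrix (Fin (4*n+m)) (Fin (4*n+m)) ℝ) = Phi n m p}
  mul_mem' := by
    rintro a b ⟨p, hp⟩ ⟨q, hq⟩
    exact ⟨fun k => mulP (p k) (q k), by
      show (a : Matrix (Fin (4*n+m)) (Fin (4*n+m)) ℝ) * (b : Matrix (Fin (4*n+m)) (Fin (4*n+m)) ℝ)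
        = _
      rw [hp, hq, Phi_mul]⟩
  one_mem' := ⟨fun _ => (0, false), by
    show (1 : Matrix (Fin (4*n+m)) (Fin (4*n+m)) ℝ) = _
    rw [Phi_one]⟩
  inv_mem' := by
    rintro a ⟨p, hp⟩
    exact ⟨fun k => invP (p k), by
      show star (a : Matrix (Fin (4*n+m)) (Fin (4*n+m)) ℝ) = _
      rw [Matrix.star_eq_conjTranspose, Matrix.conjTranspose_eq_transpose_of_trivial, hp,
        Phi_transpose]⟩

variable {n m}

lemma mem_Gsub_iff (g : ONgrp (4*n+m)) :
    g ∈ Gsub n m ↔ ∃ p, (g : Matrix (Fin (4*n+m)) (Fin (4*n+m)) ℝ) = Phi n m p := Iff.rfl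

noncomputable def qF (j : Fin n) (A : Matrix (Fin (4*n+m)) (Fin (4*n+m)) ℝ) : ℝ :=
  (A (eN n m (Sum.inl (0, j))) (eN n m (Sum.inl (0, j)))) ^ 2 +
    (A (eN n m (Sum.inl (0, j))) (eN n m (Sum.inl (1, j)))) ^ 2

noncomputable def sigFun (j : Fin n) (A : Matrix (Fin (4*n+m)) (Fin (4*n+m)) ℝ) : ℤˣ :=
  if (1:ℝ)/2 < qF j A then 1 else -1

lemma qF_Phi (j : Fin n) (p : Fin n → ℝ × Bool) :
    qF j (Phi n m p) = if (p j).2 then 0 else 1 := by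
  unfold qF
  rw [Phi_apply_block, Phi_apply_block]
  rcases hpj : p j with ⟨θ, b⟩
  cases b
  · simp only [B, if_neg Bool.false_ne_true]
    simp [Matrix.vecHead, Matrix.vecTail]
  · simp [B, Matrix.vecHead, Matrix.vecTail]

lemma sigFun_Phi (j : Fin n) (p : Fin n → ℝ × Bool) :
    sigFun j (Phi n m p) = if (p j).2 then -1 else 1 := by
  unfold sigFun
  rw [qF_Phi]
  rcases hpj : (p j).2 <;> norm_num

noncomputable def sig (j : Fin n) : ↥(Gsub n m) →* ℤˣ where
  toFun g := sigFun j ((g : ONgrp (4*n+m)) : Matrix (Fin (4*n+m)) (Fin (4*n+m)) ℝ)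
  map_one' := by
    show sigFun j (1 : Matrix (Fin (4*n+m)) (Fin (4*n+m)) ℝ) = 1
    rw [← Phi_one, sigFun_Phi]
    norm_num
  map_mul' g h := by
    obtain ⟨p, hp⟩ := g.2
    obtain ⟨q, hq⟩ := h.2
    show sigFun j (((g : ONgrp (4*n+m)) : Matrix (Fin (4*n+m)) (Fin (4*n+m)) ℝ) *
        ((h : ONgrp (4*n+m)) : Matrix (Fin (4*n+m)) (Fin (4*n+m)) ℝ))
      = sigFun j ((g : ONgrp (4*n+m)) : Matrix (Fin (4*n+m)) (Fin (4*n+m)) ℝ) *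
        sigFun j ((h : ONgrp (4*n+m)) : Matrix (Fin (4*n+m)) (Fin (4*n+m)) ℝ)
    rw [hp, hq, Phi_mul, sigFun_Phi, sigFun_Phi, sigFun_Phi]
    rcases h1 : (p j).2 <;> rcases h2 : (q j).2 <;> simp [mulP, h1, h2]

lemma sig_spec (j : Fin n) (g : ↥(Gsub n m)) (p : Fin n → ℝ × Bool)
    (hp : ((g : ONgrp (4*n+m)) : Matrix _ _ ℝ) = Phi n m p) :
    sig j g = if (p j).2 then -1 else 1 := by
  show sigFun j ((g : ONgrp (4*n+m)) : Matrix (Fin (4*n+m)) (Fin (4*n+m)) ℝ) = _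
  rw [hp, sigFun_Phi]

lemma ogAct_coord {N : ℕ} (g : ONgrp N) (x : Euc N) (i : Fin N) :
    ogAct g x i = ((g : Matrix (Fin N) (Fin N) ℝ) *ᵥ fun j => x j) i := rfl

lemma Phi_congr (p q : Fin n → ℝ × Bool) (h : ∀ k, B (p k) = B (q k)) :
    Phi n m p = Phi n m q := by
  unfold Phi
  rw [show (fun k => B (p k)) = fun k => B (q k) from funext h]

open Real in
lemma range_Phi_eq : Set.range (Phi n m) = ⋃ b : Fin n → Bool,
    (fun θ : Fin n → ℝ => Phi n m fun k => (θ k, b k)) ''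
      (Set.pi Set.univ fun _ => Set.Icc 0 (2*π)) := by
  have h2π : (0:ℝ) < 2*π := by positivity
  ext A
  constructor
  · rintro ⟨p, rfl⟩
    apply Set.mem_iUnion.2
    refine ⟨fun k => (p k).2, fun k => 2*π * Int.fract ((p k).1 / (2*π)), ?_, ?_⟩
    · intro k _
      constructor
      · have := Int.fract_nonneg ((p k).1 / (2*π))
        nlinarith
      · have := (Int.fract_lt_one ((p k).1 / (2*π))).le
        nlinarith
    · apply Phi_congr
      intro k
      have hkey : (p k).1 = 2*π * Int.fract ((p k).1 / (2*π)) + ⌊(p k).1 / (2*π)⌋ * (2*π) := by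
        rw [Int.fract]
        field_simp
        ring
      have hc : Real.cos (2*π * Int.fract ((p k).1 / (2*π))) = Real.cos (p k).1 := by
        conv_rhs => rw [hkey]
        rw [Real.cos_add_int_mul_two_pi]
      have hs : Real.sin (2*π * Int.fract ((p k).1 / (2*π))) = Real.sin (p k).1 := by
        conv_rhs => rw [hkey]
        rw [Real.sin_add_int_mul_two_pi]
      rw [show p k = ((p k).1, (p k).2) from rfl]
      exact B_congr _ hc hs
  · intro hA
    obtain ⟨b, θ, _, rfl⟩ := Set.mem_iUnion.1 hA
    exact ⟨_, rfl⟩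

open Real in
lemma isClosed_range_Phi : IsClosed (Set.range (Phi n m)) := by
  rw [range_Phi_eq]
  apply IsCompact.isClosed
  apply isCompact_iUnion
  intro b
  apply IsCompact.image (isCompact_univ_pi fun _ => isCompact_Icc)
  have hB : Continuous fun θ : Fin n → ℝ => fun k => B (θ k, b k) :=
    continuous_pi fun k => (B_continuous (b k)).comp (continuous_apply k)
  unfold Phi
  simp only [reindex_apply]
  exact (((hB.matrix_blockDiagonal).matrix_fromBlocks continuous_const continuous_const
    continuous_const).matrix_submatrix _ _)

lemma isClosed_Gsub : IsClosed ((Gsub n m : Set (ONgrp (4*n+m)))) := by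
  have : (Gsub n m : Set (ONgrp (4*n+m))) =
      (fun g : ONgrp (4*n+m) => (g : Matrix (Fin (4*n+m)) (Fin (4*n+m)) ℝ)) ⁻¹'
        Set.range (Phi n m) := by
    ext g
    simp only [Set.mem_preimage, Set.mem_range, SetLike.mem_coe, mem_Gsub_iff]
    exact exists_congr fun p => eq_comm
  rw [this]
  exact isClosed_range_Phi.preimage continuous_subtype_val

lemma continuous_qF (j : Fin n) :
    Continuous fun g : ↥(Gsub n m) =>
      qF j ((g : ONgrp (4*n+m)) : Matrix (Fin (4*n+m)) (Fin (4*n+m)) ℝ) := by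
  have hmat : Continuous fun g : ↥(Gsub n m) =>
      ((g : ONgrp (4*n+m)) : Matrix (Fin (4*n+m)) (Fin (4*n+m)) ℝ) :=
    continuous_subtype_val.comp continuous_subtype_val
  unfold qF
  exact ((hmat.matrix_elem _ _).pow 2).add ((hmat.matrix_elem _ _).pow 2)

lemma qF_dichotomy (j : Fin n) (g : ↥(Gsub n m)) :
    qF j ((g : ONgrp (4*n+m)) : Matrix (Fin (4*n+m)) (Fin (4*n+m)) ℝ) = 0 ∨
      qF j ((g : ONgrp (4*n+m)) : Matrix (Fin (4*n+m)) (Fin (4*n+m)) ℝ) = 1 := by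
  obtain ⟨p, hp⟩ := g.2
  rw [hp, qF_Phi]
  rcases (p j).2 <;> simp

lemma sig_dichotomy (j : Fin n) (g : ↥(Gsub n m)) : sig j g = 1 ∨ sig j g = -1 := by
  show sigFun j _ = 1 ∨ sigFun j _ = -1
  unfold sigFun
  split_ifs <;> simp

lemma continuous_sig (j : Fin n) : Continuous (sig (n := n) (m := m) j) := by
  apply IsLocallyConstant.continuous
  intro s
  classical
  set F := fun g : ↥(Gsub n m) =>
    qF j ((g : ONgrp (4*n+m)) : Matrix (Fin (4*n+m)) (Fin (4*n+m)) ℝ) with hF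
  have hFval : ∀ g, F g = 0 ∨ F g = 1 := qF_dichotomy j
  have hsig : ∀ g : ↥(Gsub n m), sig j g = if (1:ℝ)/2 < F g then 1 else -1 := fun g => rfl
  have hkey : (sig (n := n) (m := m) j) ⁻¹' s =
      ((if (1 : ℤˣ) ∈ s then {g : ↥(Gsub n m) | (1:ℝ)/2 < F g} else ∅) ∪
       (if (-1 : ℤˣ) ∈ s then {g : ↥(Gsub n m) | F g < (1:ℝ)/2} else ∅)) := by
    ext g
    rcases hFval g with h | h
    · have h1 : sig j g = -1 := by rw [hsig g, h]; norm_num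
      simp only [Set.mem_preimage, h1, Set.mem_union]
      split_ifs with hs1 hs2 hs2 <;>
        simp [h, hs1, hs2] <;> norm_num
    · have h1 : sig j g = 1 := by rw [hsig g, h]; norm_num
      simp only [Set.mem_preimage, h1, Set.mem_union]
      split_ifs with hs1 hs2 hs2 <;>
        simp [h, hs1, hs2] <;> norm_num
  rw [hkey]
  have hopen1 : IsOpen {g : ↥(Gsub n m) | (1:ℝ)/2 < F g} :=
    isOpen_lt continuous_const (continuous_qF j)
  have hopen2 : IsOpen {g : ↥(Gsub n m) | F g < (1:ℝ)/2} :=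
    isOpen_lt (continuous_qF j) continuous_const
  apply IsOpen.union <;> split_ifs <;>
    first | exact hopen1 | exact hopen2 | exact isOpen_empty

lemma Gsub_fixed (x : Euc (4*n+m)) (hx : ∀ k r, x (eN n m (Sum.inl (r, k))) = 0)
    (g : ↥(Gsub n m)) : ogAct (g : ONgrp (4*n+m)) x = x := by
  obtain ⟨p, hp⟩ := g.2
  ext i
  rw [ogAct_coord, hp]
  rcases hq : (eN n m).symm i with ⟨r, k⟩ | t
  · have hi : i = eN n m (Sum.inl (r, k)) := by rw [← hq, Equiv.apply_symm_apply]
    rw [hi, Phi_mulVec_inl]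
    simp [hx]
  · have hi : i = eN n m (Sum.inr t) := by rw [← hq, Equiv.apply_symm_apply]
    rw [hi, Phi_mulVec_inr]

noncomputable def gRot (k : Fin n) (θ : ℝ) : ↥(Gsub n m) :=
  ⟨⟨Phi n m fun l => (if l = k then θ else 0, false), Phi_mem _⟩, ⟨_, rfl⟩⟩

lemma gRot_coord (k : Fin n) (θ : ℝ) (x : Euc (4*n+m)) (r : Fin 4) :
    ogAct ((gRot (m := m) k θ : ↥(Gsub n m)) : ONgrp (4*n+m)) x (eN n m (Sum.inl (r, k))) =
      ∑ r', B (θ, false) r r' * x (eN n m (Sum.inl (r', k))) := by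
  rw [ogAct_coord]
  rw [show (((gRot (m := m) k θ : ↥(Gsub n m)) : ONgrp (4*n+m)) :
      Matrix (Fin (4*n+m)) (Fin (4*n+m)) ℝ)
    = Phi n m fun l => (if l = k then θ else 0, false) from rfl]
  rw [Phi_mulVec_inl]
  simp

lemma condG1_aux (x : Euc (4*n+m)) :
    ({y : Euc (4*n+m) | ∃ g : ↥(Gsub n m), ogAct (g : ONgrp (4*n+m)) x = y}).Infinite ∨
      ∀ g : ↥(Gsub n m), ogAct (g : ONgrp (4*n+m)) x = x := by
  by_cases hx : ∀ k : Fin n, ∀ r : Fin 4, x (eN n m (Sum.inl (r, k))) = 0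
  · exact Or.inr fun g => Gsub_fixed x hx g
  · left
    push_neg at hx
    obtain ⟨k, r, hr⟩ := hx
    have a : Fin 4 → ℝ := fun i => x (eN n m (Sum.inl (i, k)))
    clear a
    set a : Fin 4 → ℝ := fun i => x (eN n m (Sum.inl (i, k))) with ha
    have hax : ∀ i : Fin 4, x (eN n m (Sum.inl (i, k))) = a i := fun i => rfl
    have htot : 0 < a 0 ^ 2 + a 1 ^ 2 + a 2 ^ 2 + a 3 ^ 2 := by
      have h1 : a r ≠ 0 := hr
      have h2 : 0 < a r ^ 2 := pow_two_pos_of_ne_zero h1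
      have hcases : ∀ i : Fin 4, i = 0 ∨ i = 1 ∨ i = 2 ∨ i = 3 := by decide
      rcases hcases r with rfl | rfl | rfl | rfl <;>
        nlinarith [sq_nonneg (a 0), sq_nonneg (a 1), sq_nonneg (a 2), sq_nonneg (a 3)]
    apply Set.infinite_of_injective_forall_mem
      (f := fun t : ℕ =>
        ogAct ((gRot (m := m) k (Real.arctan t) : ↥(Gsub n m)) : ONgrp (4*n+m)) x)
    · intro t₁ t₂ h
      have hy : ogAct ((gRot (m := m) k (Real.arctan t₁) : ↥(Gsub n m)) : ONgrp (4*n+m)) x =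
          ogAct ((gRot (m := m) k (Real.arctan t₂) : ↥(Gsub n m)) : ONgrp (4*n+m)) x := h
      have key : ∀ r' : Fin 4,
          ∑ r'', B (Real.arctan t₁, false) r' r'' * x (eN n m (Sum.inl (r'', k))) =
          ∑ r'', B (Real.arctan t₂, false) r' r'' * x (eN n m (Sum.inl (r'', k))) := by
        intro r'
        rw [← gRot_coord, ← gRot_coord, hy]
      have e0 := key 0
      have e1 := key 1
      have e2 := key 2
      have e3 := key 3
      simp only [hax] at e0 e1 e2 e3
      simp [B, Fin.sum_univ_four, Matrix.vecHead, Matrix.vecTail] at e0 e1 e2 e3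
      have hc : Real.cos (Real.arctan t₁) = Real.cos (Real.arctan t₂) := by
        have h0 : (Real.cos (Real.arctan t₁) - Real.cos (Real.arctan t₂)) *
            (a 0 ^ 2 + a 1 ^ 2 + a 2 ^ 2 + a 3 ^ 2) = 0 := by
          linear_combination a 0 * e0 + a 1 * e1 + a 2 * e2 + a 3 * e3
        rcases mul_eq_zero.1 h0 with h' | h'
        · linarith
        · exact absurd h' (ne_of_gt htot)
      have hs : Real.sin (Real.arctan t₁) = Real.sin (Real.arctan t₂) := by
        have h0 : (Real.sin (Real.arctan t₁) - Real.sin (Real.arctan t₂)) *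
            (a 0 ^ 2 + a 1 ^ 2 + a 2 ^ 2 + a 3 ^ 2) = 0 := by
          linear_combination a 0 * e1 - a 1 * e0 + a 2 * e3 - a 3 * e2
        rcases mul_eq_zero.1 h0 with h' | h'
        · linarith
        · exact absurd h' (ne_of_gt htot)
      have harc : Real.arctan t₁ = Real.arctan t₂ := by
        apply Real.injOn_sin ?_ ?_ hs
        · exact ⟨(Real.neg_pi_div_two_lt_arctan _).le, (Real.arctan_lt_pi_div_two _).le⟩
        · exact ⟨(Real.neg_pi_div_two_lt_arctan _).le, (Real.arctan_lt_pi_div_two _).le⟩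
      exact_mod_cast Real.arctan_injective harc
    · intro t
      exact ⟨gRot k (Real.arctan t), rfl⟩

lemma condG2_aux (j : Fin n) :
    ∃ ξ : Euc (4*n+m), ∀ g : ↥(Gsub n m), ogAct (g : ONgrp (4*n+m)) ξ = ξ → sig j g = 1 := by
  classical
  refine ⟨WithLp.toLp 2 (fun i => if i = eN n m (Sum.inl (0, j)) then 1 else 0 : Fin (4*n+m) → ℝ), ?_⟩
  intro g hg
  obtain ⟨p, hp⟩ := g.2
  have hcoord : ogAct (g : ONgrp (4*n+m))
      (WithLp.toLp 2 (fun i => if i = eN n m (Sum.inl (0, j)) then 1 else 0 : Fin (4*n+m) → ℝ))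
      (eN n m (Sum.inl (0, j))) = B (p j) 0 0 := by
    rw [ogAct_coord, hp, Phi_mulVec_inl, Fin.sum_univ_four]
    simp [Equiv.apply_eq_iff_eq, Prod.ext_iff]
  have h1 : B (p j) 0 0 = 1 := by
    rw [← hcoord, hg]
    simp
  rcases hpj : p j with ⟨θ, b⟩
  rw [hpj] at h1
  cases b
  · rw [sig_spec j g p hp, hpj]
    norm_num
  · exfalso
    simp [B, Matrix.vecHead, Matrix.vecTail] at h1

noncomputable def gNeg (j : Fin n) : ↥(Gsub n m) :=
  ⟨⟨Phi n m fun k => (0, decide (k = j)), Phi_mem _⟩, ⟨_, rfl⟩⟩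

lemma sig_gNeg (i j : Fin n) : sig i (gNeg (m := m) j) = if i = j then -1 else 1 := by
  rw [sig_spec i _ _ rfl]
  by_cases h : i = j <;> simp [h]

lemma sig_surjective (j : Fin n) : Function.Surjective (sig (n := n) (m := m) j) := by
  intro u
  rcases Int.units_eq_one_or u with rfl | rfl
  · exact ⟨1, map_one _⟩
  · exact ⟨gNeg j, by rw [sig_gNeg]; simp⟩


end S19

/-- for `N = 4n + m` there exist `n` closed subgroups `G_j` of `O(N)` with
continuous surjective homomorphisms `σ_j : G_j → ℤˣ` satisfying (G1) and (G2), such that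
nontrivial `σ_i`- and `σ_j`-equivariant functions are distinct for `i ≠ j`. -/
theorem statement19 (n m N : ℕ) (hn : 1 ≤ n) (hm : m ≤ 3) (hNnm : N = 4 * n + m) :
    ∃ (G : Fin n → Subgroup (ONgrp N)) (σ : (j : Fin n) → (G j →* ℤˣ)),
      (∀ j : Fin n, IsClosed ((G j : Set (ONgrp N))) ∧ Continuous (σ j) ∧
        Function.Surjective (σ j) ∧ CondG1 (G j) ∧ CondG2 (G j) (σ j)) ∧
      (∀ i j : Fin n, i ≠ j → ∀ u v : Euc N → ℝ,
        IsEquivariant (G i) (σ i) u → u ≠ 0 →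
        IsEquivariant (G j) (σ j) v → v ≠ 0 → u ≠ v) := by
  subst hNnm
  refine ⟨fun _ => S19.Gsub n m, fun j => S19.sig j, fun j =>
    ⟨S19.isClosed_Gsub, S19.continuous_sig j, S19.sig_surjective j, S19.condG1_aux,
      S19.condG2_aux j⟩, ?_⟩
  intro i j hij u v hu hu0 hv hv0 heq
  apply hu0
  funext x
  have h1 := hu (S19.gNeg (m := m) j) x
  rw [S19.sig_gNeg, if_neg hij] at h1
  have h2 := hv (S19.gNeg (m := m) j) x
  rw [S19.sig_gNeg, if_pos rfl] at h2
  rw [← heq] at h2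
  simp only [Units.val_one, Int.cast_one, one_mul, Units.val_neg, Int.cast_neg] at h1 h2
  show u x = 0
  rw [h1] at h2
  linarith

end
end
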